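/- Let Γ be a free numerical semigroup on generators a₀,…,a_g with constants n_i and representation coefficients ℓ_j^{(s)}. Then for every s ≥ 2, the cardinality of the set D′_{ℓ_{s−1}^{(s)}} defined recursively by D′ = I_{ℓ_{s−2}^{(s)}} if ℓ_{s−1}^{(s)} = 0 and D′ = I_{ℓ_{s−2}^{(s)}} ∪ I_{ℓ_{s−1}^{(s)}} otherwise, satisfies |D′_{ℓ_{s−1}^{(s)}}| = a_s / e_s, where e_s = gcd(a₀,…,a_s). Equivalently, for each t ≤ s, |D′_{ℓ_{t−2}^{(s)}}| = (ℓ₀^{(s)}a₀ + ⋯ + ℓ_{t−2}^{(s)}a_{t−2})/(n_{t−1}⋯n_g). -/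

import Mathlib

def Dp (n : ℕ → ℕ) (ℓ : ℕ → ℕ → ℕ) : ℕ → ℕ → Finset (List ℕ)
  | _, 0 => ∅
  | _, 1 => ∅
  | s, 2 =>
      ((Finset.range (ℓ s 0)) ×ˢ (Finset.range (n 1))).image
          (fun p => [p.1, p.2]) ∪
      (if ℓ s 1 = 0 then ∅ else
        ((Finset.range (ℓ 1 0)) ×ˢ (Finset.range (ℓ s 1))).image
          (fun p => [p.1 + ℓ s 0, p.2]))
  | s, (t + 3) =>
      ((Dp n ℓ s (t + 2)) ×ˢ (Finset.range (n (t + 2)))).image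
          (fun p => p.1 ++ [p.2]) ∪
      (if ℓ s (t + 2) = 0 then ∅ else
        ((Dp n ℓ (t + 2) (t + 2)) ×ˢ (Finset.range (ℓ s (t + 2)))).image
          (fun p => (List.zipWith (· + ·) p.1 ((List.range (t + 2)).map (ℓ s)))
            ++ [p.2]))

lemma Dp_length (n : ℕ → ℕ) (ℓ : ℕ → ℕ → ℕ) :
    ∀ t s l, l ∈ Dp n ℓ s t → l.length = t := by
  intro t
  induction t using Nat.strong_induction_on with
  | _ t ih =>
    match t with
    | 0 => intro s l hl; simp [Dp] at hl
    | 1 => intro s l hl; simp [Dp] at hl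
    | 2 =>
      intro s l hl
      simp only [Dp, Finset.mem_union, Finset.mem_image] at hl
      rcases hl with ⟨p, _, rfl⟩ | hl
      · rfl
      · split at hl
        · simp at hl
        · simp only [Finset.mem_image] at hl
          obtain ⟨p, _, rfl⟩ := hl; rfl
    | (t+3) =>
      intro s l hl
      simp only [Dp, Finset.mem_union, Finset.mem_image] at hl
      rcases hl with ⟨p, hp, rfl⟩ | hl
      · rw [Finset.mem_product] at hp
        simp [List.length_append, ih (t+2) (by omega) s p.1 hp.1]
      · split at hl
        · simp at hl
        · simp only [Finset.mem_image] at hl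
          obtain ⟨p, hp, rfl⟩ := hl
          rw [Finset.mem_product] at hp
          rw [List.length_append, List.length_zipWith, List.length_map, List.length_range,
            ih (t+2) (by omega) (t+2) p.1 hp.1]
          simp

lemma Dp_exists_lt (n : ℕ → ℕ) (ℓ : ℕ → ℕ → ℕ) :
    ∀ t s l, l ∈ Dp n ℓ s t → ∃ j, ∃ hj : j < l.length, l[j] < ℓ s j := by
  intro t
  induction t using Nat.strong_induction_on with
  | _ t ih =>
    match t with
    | 0 => intro s l hl; simp [Dp] at hl
    | 1 => intro s l hl; simp [Dp] at hl
    | 2 =>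
      intro s l hl
      simp only [Dp, Finset.mem_union, Finset.mem_image] at hl
      rcases hl with ⟨p, hp, rfl⟩ | hl
      · rw [Finset.mem_product, Finset.mem_range, Finset.mem_range] at hp
        exact ⟨0, by simp, by simpa using hp.1⟩
      · split at hl
        · simp at hl
        · simp only [Finset.mem_image] at hl
          obtain ⟨p, hp, rfl⟩ := hl
          rw [Finset.mem_product, Finset.mem_range, Finset.mem_range] at hp
          exact ⟨1, by simp, by simpa using hp.2⟩
    | (t+3) =>
      intro s l hl
      simp only [Dp, Finset.mem_union, Finset.mem_image] at hl
      rcases hl with ⟨p, hp, rfl⟩ | hl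
      · rw [Finset.mem_product] at hp
        obtain ⟨j, hj, hlt⟩ := ih (t+2) (by omega) s p.1 hp.1
        refine ⟨j, ?_, ?_⟩
        · rw [List.length_append]; omega
        · rwa [List.getElem_append_left hj]
      · split at hl
        · simp at hl
        · simp only [Finset.mem_image] at hl
          obtain ⟨p, hp, rfl⟩ := hl
          rw [Finset.mem_product, Finset.mem_range] at hp
          have hlen : (List.zipWith (· + ·) p.1
              ((List.range (t + 2)).map (ℓ s))).length = t + 2 := by
            rw [List.length_zipWith, List.length_map, List.length_range,
              Dp_length n ℓ (t+2) (t+2) p.1 hp.1]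
            simp
          refine ⟨t + 2, ?_, ?_⟩
          · rw [List.length_append, hlen]; simp
          · rw [List.getElem_concat_length hlen.symm]
            exact hp.2

lemma Dp_card_two (n : ℕ → ℕ) (ℓ : ℕ → ℕ → ℕ) (s : ℕ) :
    (Dp n ℓ s 2).card = ℓ s 0 * n 1 + ℓ 1 0 * ℓ s 1 := by
  have hinj1 : Set.InjOn (fun p : ℕ × ℕ => [p.1, p.2])
      ↑((Finset.range (ℓ s 0)) ×ˢ (Finset.range (n 1))) := by
    intro p _ q _ h
    simp only [List.cons.injEq, and_true] at h
    exact Prod.ext h.1 h.2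
  by_cases hc : ℓ s 1 = 0
  · simp only [Dp, hc, if_true, Finset.union_empty]
    rw [Finset.card_image_of_injOn hinj1, Finset.card_product]
    simp [hc]
  · have hinj2 : Set.InjOn (fun p : ℕ × ℕ => [p.1 + ℓ s 0, p.2])
        ↑((Finset.range (ℓ 1 0)) ×ˢ (Finset.range (ℓ s 1))) := by
      intro p _ q _ h
      simp only [List.cons.injEq, and_true] at h
      exact Prod.ext (by omega) h.2
    have hdisj : Disjoint
        (((Finset.range (ℓ s 0)) ×ˢ (Finset.range (n 1))).image
          (fun p : ℕ × ℕ => [p.1, p.2]))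
        (((Finset.range (ℓ 1 0)) ×ˢ (Finset.range (ℓ s 1))).image
          (fun p : ℕ × ℕ => [p.1 + ℓ s 0, p.2])) := by
      rw [Finset.disjoint_left]
      intro x hx hx'
      simp only [Finset.mem_image, Finset.mem_product, Finset.mem_range] at hx hx'
      obtain ⟨p, hp, rfl⟩ := hx
      obtain ⟨q, hq, hqe⟩ := hx'
      simp only [List.cons.injEq, and_true] at hqe
      omega
    simp only [Dp, if_neg hc]
    rw [Finset.card_union_of_disjoint hdisj, Finset.card_image_of_injOn hinj1,
      Finset.card_image_of_injOn hinj2, Finset.card_product, Finset.card_product]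
    simp

lemma Dp_card_step (n : ℕ → ℕ) (ℓ : ℕ → ℕ → ℕ) (s t : ℕ) :
    (Dp n ℓ s (t + 3)).card =
      (Dp n ℓ s (t + 2)).card * n (t + 2)
        + (Dp n ℓ (t + 2) (t + 2)).card * ℓ s (t + 2) := by
  have hinj1 : Set.InjOn (fun p : List ℕ × ℕ => p.1 ++ [p.2])
      ↑((Dp n ℓ s (t + 2)) ×ˢ (Finset.range (n (t + 2)))) := by
    intro p hp q hq h
    simp only [Finset.coe_product, Set.mem_prod, Finset.mem_coe] at hp hq
    have hlen : p.1.length = q.1.length := by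
      rw [Dp_length n ℓ (t+2) s p.1 hp.1, Dp_length n ℓ (t+2) s q.1 hq.1]
    obtain ⟨h1, h2⟩ := List.append_inj h hlen
    simp only [List.cons.injEq, and_true] at h2
    exact Prod.ext h1 h2
  by_cases hc : ℓ s (t + 2) = 0
  · simp only [Dp, hc, if_true, Finset.union_empty]
    rw [Finset.card_image_of_injOn hinj1, Finset.card_product]
    simp [hc]
  · set v : List ℕ := (List.range (t + 2)).map (ℓ s) with hv
    have hvlen : v.length = t + 2 := by simp [hv]
    have hvget : ∀ (j : ℕ) (hj : j < v.length), v[j] = ℓ s j := by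
      intro j hj
      simp [hv]
    have hziplen : ∀ l ∈ Dp n ℓ (t + 2) (t + 2),
        (List.zipWith (· + ·) l v).length = t + 2 := by
      intro l hl
      rw [List.length_zipWith, hvlen, Dp_length n ℓ (t+2) (t+2) l hl]
      simp
    have hinj2 : Set.InjOn
        (fun p : List ℕ × ℕ => (List.zipWith (· + ·) p.1 v) ++ [p.2])
        ↑((Dp n ℓ (t + 2) (t + 2)) ×ˢ (Finset.range (ℓ s (t + 2)))) := by
      intro p hp q hq h
      simp only [Finset.coe_product, Set.mem_prod, Finset.mem_coe] at hp hq
      have hlen : (List.zipWith (· + ·) p.1 v).length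
          = (List.zipWith (· + ·) q.1 v).length := by
        rw [hziplen p.1 hp.1, hziplen q.1 hq.1]
      obtain ⟨h1, h2⟩ := List.append_inj h hlen
      simp only [List.cons.injEq, and_true] at h2
      refine Prod.ext ?_ h2
      have hp1 : p.1.length = t + 2 := Dp_length n ℓ (t+2) (t+2) p.1 hp.1
      have hq1 : q.1.length = t + 2 := Dp_length n ℓ (t+2) (t+2) q.1 hq.1
      apply List.ext_getElem (by omega)
      intro j hj1 hj2
      have hj : j < (List.zipWith (· + ·) p.1 v).length := by
        rw [hziplen p.1 hp.1]; omega
      have hj' : j < (List.zipWith (· + ·) q.1 v).length := by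
        rw [hziplen q.1 hq.1]; omega
      have e1 : (List.zipWith (· + ·) p.1 v)[j]'hj
          = (List.zipWith (· + ·) q.1 v)[j]'hj' := by
        simp only [h1]
      simp only [List.getElem_zipWith] at e1
      omega
    have hdisj : Disjoint
        (((Dp n ℓ s (t + 2)) ×ˢ (Finset.range (n (t + 2)))).image
          (fun p : List ℕ × ℕ => p.1 ++ [p.2]))
        (((Dp n ℓ (t + 2) (t + 2)) ×ˢ (Finset.range (ℓ s (t + 2)))).image
          (fun p : List ℕ × ℕ => (List.zipWith (· + ·) p.1 v) ++ [p.2])) := by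
      rw [Finset.disjoint_left]
      intro x hx hx'
      simp only [Finset.mem_image, Finset.mem_product] at hx hx'
      obtain ⟨p, hp, rfl⟩ := hx
      obtain ⟨q, hq, hqe⟩ := hx'
      have hlenp : p.1.length = t + 2 := Dp_length n ℓ (t+2) s p.1 hp.1
      have hlenq : (List.zipWith (· + ·) q.1 v).length = t + 2 :=
        hziplen q.1 hq.1
      obtain ⟨h1, _⟩ := List.append_inj hqe.symm (by omega)
      obtain ⟨j, hj, hlt⟩ := Dp_exists_lt n ℓ (t+2) s p.1 hp.1
      simp only [h1, List.getElem_zipWith, hv, List.getElem_map,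
        List.getElem_range] at hlt
      omega
    simp only [Dp, if_neg hc]
    rw [Finset.card_union_of_disjoint hdisj, Finset.card_image_of_injOn hinj1,
      Finset.card_image_of_injOn hinj2, Finset.card_product, Finset.card_product]
    simp

theorem stmt6 (G : ℕ) (hG : 2 ≤ G) (a : ℕ → ℕ) (hpos : ∀ i, i ≤ G → 0 < a i)
    (e : ℕ → ℕ) (he : ∀ i, e i = (Finset.range (i + 1)).gcd a)
    (hgcd : e G = 1)
    (n : ℕ → ℕ) (hn : ∀ i, 1 ≤ i → i ≤ G → n i * e i = e (i - 1))
    (ℓ : ℕ → ℕ → ℕ)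
    (hrep : ∀ i, 1 ≤ i → i ≤ G →
      n i * a i = ∑ j ∈ Finset.range i, ℓ i j * a j)
    (hℓ : ∀ i j, 1 ≤ j → j < i → i ≤ G → ℓ i j < n j) :
    ∀ s, 2 ≤ s → s ≤ G →
      (Dp n ℓ s s).card * e s = a s ∧
      ∀ t, 2 ≤ t → t ≤ s →
        (Dp n ℓ s t).card * ∏ j ∈ Finset.Icc t G, n j
          = ∑ j ∈ Finset.range t, ℓ s j * a j := by
  have epos : ∀ i, 0 < e i := by
    intro i
    rw [he i]
    rcases Nat.eq_zero_or_pos ((Finset.range (i + 1)).gcd a) with h | h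
    · have h0 := Finset.gcd_eq_zero_iff.mp h 0 (Finset.mem_range.mpr (by omega))
      have := hpos 0 (by omega)
      omega
    · exact h
  have npos : ∀ i, 1 ≤ i → i ≤ G → 0 < n i := by
    intro i h1 h2
    have h3 := hn i h1 h2
    have h4 := epos (i - 1)
    rcases Nat.eq_zero_or_pos (n i) with h | h
    · rw [h, zero_mul] at h3; omega
    · exact h
  have e0a : e 0 = a 0 := by
    rw [he 0]
    simp
  have key : ∀ t, 2 ≤ t → t ≤ G →
      ∀ s, t ≤ s → s ≤ G →
        (Dp n ℓ s t).card * e (t - 1) = ∑ j ∈ Finset.range t, ℓ s j * a j := by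
    intro t ht
    induction t, ht using Nat.le_induction with
    | base =>
      intro _ s _ _
      rw [Dp_card_two]
      have he1 : n 1 * e 1 = e 0 := hn 1 (by omega) (by omega)
      have hn1 : 0 < n 1 := npos 1 (by omega) (by omega)
      have h : n 1 * a 1 = ℓ 1 0 * a 0 := by
        have h' := hrep 1 (by omega) (by omega)
        rwa [Finset.sum_range_one] at h'
      have ha0 : a 0 = n 1 * e 1 := by rw [he1]; exact e0a.symm
      have h10 : ℓ 1 0 * e 1 = a 1 := by
        apply Nat.eq_of_mul_eq_mul_left hn1
        calc n 1 * (ℓ 1 0 * e 1) = ℓ 1 0 * (n 1 * e 1) := by ring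
          _ = ℓ 1 0 * a 0 := by rw [← ha0]
          _ = n 1 * a 1 := h.symm
      rw [Finset.sum_range_succ, Finset.sum_range_one]
      show (ℓ s 0 * n 1 + ℓ 1 0 * ℓ s 1) * e 1 = ℓ s 0 * a 0 + ℓ s 1 * a 1
      rw [ha0, ← h10]
      ring
    | succ t ht ih =>
      intro htG s hs hsG
      have hstep := Dp_card_step n ℓ s (t - 2)
      have h32 : t - 2 + 3 = t + 1 := by omega
      have h22 : t - 2 + 2 = t := by omega
      rw [h32, h22] at hstep
      rw [hstep]
      have hIH := ih (by omega) s (by omega) (by omega)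
      have hIHt := ih (by omega) t le_rfl (by omega)
      have het : n t * e t = e (t - 1) := hn t (by omega) (by omega)
      have hnt : 0 < n t := npos t (by omega) (by omega)
      have hat : (Dp n ℓ t t).card * e t = a t := by
        apply Nat.eq_of_mul_eq_mul_left hnt
        calc n t * ((Dp n ℓ t t).card * e t)
            = (Dp n ℓ t t).card * (n t * e t) := by ring
          _ = (Dp n ℓ t t).card * e (t - 1) := by rw [het]
          _ = ∑ j ∈ Finset.range t, ℓ t j * a j := hIHt
          _ = n t * a t := (hrep t (by omega) (by omega)).symm
      rw [Finset.sum_range_succ, ← hIH, ← hat, Nat.add_sub_cancel, ← het]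
      ring
  have hE : ∀ d, d ≤ G → (∏ j ∈ Finset.Icc (G - d + 1) G, n j) = e (G - d) := by
    intro d
    induction d with
    | zero =>
      intro _
      rw [Nat.sub_zero, Finset.Icc_eq_empty (by omega), Finset.prod_empty]
      exact hgcd.symm
    | succ d ihd =>
      intro hd
      have h1 : G - (d + 1) + 1 = G - d := by omega
      rw [h1, ← Finset.Ico_add_one_right_eq_Icc,
        Finset.prod_eq_prod_Ico_succ_bot (by omega), Finset.Ico_add_one_right_eq_Icc,
        ihd (by omega), hn (G - d) (by omega) (by omega)]
      have h2 : G - d - 1 = G - (d + 1) := by omega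
      rw [h2]
  have hprodIcc : ∀ t, 1 ≤ t → t ≤ G →
      (∏ j ∈ Finset.Icc t G, n j) = e (t - 1) := by
    intro t h1 h2
    rw [← Finset.Ico_add_one_right_eq_Icc, Finset.prod_eq_prod_Ico_succ_bot (by omega),
      Finset.Ico_add_one_right_eq_Icc]
    have h3 := hE (G - t) (by omega)
    have h4 : G - (G - t) = t := by omega
    rw [h4] at h3
    rw [h3, hn t h1 h2]
  intro s hs2 hsG
  constructor
  · have hns : 0 < n s := npos s (by omega) hsG
    have hes : n s * e s = e (s - 1) := hn s (by omega) hsG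
    apply Nat.eq_of_mul_eq_mul_left hns
    calc n s * ((Dp n ℓ s s).card * e s)
        = (Dp n ℓ s s).card * (n s * e s) := by ring
      _ = (Dp n ℓ s s).card * e (s - 1) := by rw [hes]
      _ = ∑ j ∈ Finset.range s, ℓ s j * a j := key s hs2 hsG s le_rfl hsG
      _ = n s * a s := (hrep s (by omega) hsG).symm
  · intro t ht2 hts
    rw [hprodIcc t (by omega) (by omega)]
    exact key t ht2 (by omega) s hts hsG
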